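/- Let α = (α_i)_{i≥0} and β = (β_i)_{i≥0} be the integer sequences with α_i = 2^i + 1 and β_i = 2 - i. Then for every positive integer n, det(P_{α,β}(n)) = F(2n+1), where F denotes the Fibonacci sequence with F(0) = 0, F(1) = 1. -/

import Mathlib

open Matrix

/-- Entry `P_{i,j}` of the generalized Pascal triangle associated to sequences `α`, `β`:
`P_{i,0} = α i`, `P_{0,j} = β j`, and `P_{i,j} = P_{i-1,j} + P_{i,j-1}` for `i, j ≥ 1`. -/
def pascalEntry {R : Type*} [CommRing R] (α β : ℕ → R) : ℕ → ℕ → R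
  | i, 0 => α i
  | 0, j + 1 => β (j + 1)
  | i + 1, j + 1 => pascalEntry α β i (j + 1) + pascalEntry α β (i + 1) j

/-- The generalized Pascal triangle `P_{α,β}(n)`. -/
def genPascal {R : Type*} [CommRing R] (α β : ℕ → R) (n : ℕ) :
    Matrix (Fin n) (Fin n) R :=
  Matrix.of fun i j => pascalEntry α β (i : ℕ) (j : ℕ)

/-- The Töplitz matrix `T_{α,β}(n)`: `t_{i,j} = α_{i-j}` if `i ≥ j`, else `β_{j-i}`. -/
def toeplitz {R : Type*} [CommRing R] (α β : ℕ → R) (n : ℕ) :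
    Matrix (Fin n) (Fin n) R :=
  Matrix.of fun i j => if (j : ℕ) ≤ (i : ℕ) then α ((i : ℕ) - (j : ℕ)) else β ((j : ℕ) - (i : ℕ))

/-- The unipotent lower triangular matrix `L(n)` with `L_{i,j} = C(i,j)` for `i ≥ j`. -/
def lowerL (R : Type*) [CommRing R] (n : ℕ) : Matrix (Fin n) (Fin n) R :=
  Matrix.of fun i j => if (j : ℕ) ≤ (i : ℕ) then ((i : ℕ).choose (j : ℕ) : R) else 0

/-- The binomial inverse transform `α̂_i = ∑_{k=0}^{i} (-1)^{i+k} C(i,k) α_k`. -/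
def hatSeq {R : Type*} [CommRing R] (α : ℕ → R) (i : ℕ) : R :=
  ∑ k ∈ Finset.range (i + 1), (-1 : R) ^ (i + k) * (i.choose k : R) * α k

/-- The binomial transform `α̌_i = ∑_{k=0}^{i} C(i,k) α_k`. -/
def checkSeq {R : Type*} [CommRing R] (α : ℕ → R) (i : ℕ) : R :=
  ∑ k ∈ Finset.range (i + 1), (i.choose k : R) * α k


open Finset

def tEnt : ℕ → ℕ → ℤ := fun k l =>
  if l = k then 2 else if l < k then 1 else if l = k + 1 then -1 else 0

lemma tEnt_shift (k l : ℕ) : tEnt (k+1) (l+1) = tEnt k l := by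
  unfold tEnt; split_ifs <;> omega

lemma tEnt_k0 (k : ℕ) : tEnt k 0 = 1 + (if k = 0 then 1 else 0) := by
  unfold tEnt; split_ifs <;> omega

lemma tEnt_0l (l : ℕ) : tEnt 0 l = (if l = 0 then 2 else if l = 1 then -1 else 0) := by
  unfold tEnt; split_ifs <;> omega

def S (i j : ℕ) : ℤ :=
  ∑ k ∈ range (i+1), ∑ l ∈ range (j+1), (i.choose k : ℤ) * (j.choose l) * tEnt k l

lemma binom_step (f : ℕ → ℤ) (i : ℕ) :
    ∑ k ∈ range (i+2), ((i+1).choose k : ℤ) * f k =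
      ∑ k ∈ range (i+1), (i.choose k : ℤ) * (f k + f (k+1)) := by
  rw [Finset.sum_range_succ' (fun k => ((i+1).choose k : ℤ) * f k) (i+1)]
  have h1 : ∀ k, ((i+1).choose (k+1) : ℤ) = (i.choose k : ℤ) + (i.choose (k+1) : ℤ) := by
    intro k; rw [Nat.choose_succ_succ]; push_cast; ring
  simp only [h1, add_mul, Finset.sum_add_distrib]
  have h2 : ∑ k ∈ range (i+1), (i.choose (k+1) : ℤ) * f (k+1) + (i.choose 0 : ℤ) * f 0
      = ∑ k ∈ range (i+1), (i.choose k : ℤ) * f k := by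
    rw [← Finset.sum_range_succ' (fun k => (i.choose k : ℤ) * f k) (i+1),
      Finset.sum_range_succ]
    simp [Nat.choose_eq_zero_of_lt]
  simp only [mul_add, Finset.sum_add_distrib, Nat.choose_zero_right, Nat.cast_one, one_mul] at h2 ⊢
  linarith [h2]

lemma S_i0 (i : ℕ) : S i 0 = 2 ^ i + 1 := by
  unfold S
  simp only [zero_add, Finset.sum_range_one, Nat.choose_self, Nat.cast_one, mul_one, one_mul, tEnt_k0]
  have : ∀ k ∈ range (i+1), (i.choose k : ℤ) * (1 + if k = 0 then 1 else 0)
      = (i.choose k : ℤ) + (if k = 0 then (i.choose k : ℤ) else 0) := by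
    intro k _; split_ifs <;> ring
  rw [Finset.sum_congr rfl this, Finset.sum_add_distrib, Finset.sum_ite_eq' (range (i+1)) 0]
  have hc : ∑ k ∈ range (i+1), (i.choose k : ℤ) = 2 ^ i := by
    have := Nat.sum_range_choose i
    exact_mod_cast congrArg (Nat.cast : ℕ → ℤ) this
  simp [hc]

lemma S_0j (j : ℕ) : S 0 (j+1) = 2 - (j+1 : ℤ) := by
  unfold S
  simp only [zero_add, Finset.sum_range_one, Nat.choose_self, Nat.cast_one, one_mul, tEnt_0l]
  rw [Finset.sum_range_succ' _ (j+1), Finset.sum_range_succ' _ j]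
  simp [Nat.choose_one_right]
  ring

lemma S_def' (i j : ℕ) :
    S i j = ∑ k ∈ range (i+1), (i.choose k : ℤ) *
      (∑ l ∈ range (j+1), ((j.choose l : ℤ)) * tEnt k l) := by
  unfold S
  refine Finset.sum_congr rfl fun k _ => ?_
  rw [Finset.mul_sum]
  exact Finset.sum_congr rfl fun l _ => by ring

lemma S_rec (i j : ℕ) : S (i+1) (j+1) = S i (j+1) + S (i+1) j := by
  set h : ℕ → ℤ := fun m => ∑ l ∈ range (j+1), (j.choose l : ℤ) * tEnt m l with hh
  set g : ℕ → ℤ := fun m => ∑ l ∈ range (j+2), ((j+1).choose l : ℤ) * tEnt m l with hg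
  have hgm : ∀ m, g (m+1) = h m + h (m+1) := by
    intro m
    have := binom_step (fun l => tEnt (m+1) l) j
    simp only [hg, hh, this]
    rw [← Finset.sum_add_distrib]
    refine Finset.sum_congr rfl fun l _ => ?_
    rw [tEnt_shift]
    ring
  have e1 : S (i+1) (j+1) = ∑ k ∈ range (i+1), (i.choose k : ℤ) * (g k + g (k+1)) := by
    rw [S_def']
    exact binom_step g i
  have e2 : S i (j+1) = ∑ k ∈ range (i+1), (i.choose k : ℤ) * g k := S_def' i (j+1)
  have e3 : S (i+1) j = ∑ k ∈ range (i+1), (i.choose k : ℤ) * (h k + h (k+1)) := by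
    rw [S_def']
    exact binom_step h i
  rw [e1, e2, e3, ← Finset.sum_add_distrib]
  refine Finset.sum_congr rfl fun k _ => ?_
  rw [hgm]
  ring

lemma pascal_eq_S (i j : ℕ) :
    pascalEntry (fun i => (2 : ℤ) ^ i + 1) (fun i => 2 - (i : ℤ)) i j = S i j := by
  induction i generalizing j with
  | zero =>
    cases j with
    | zero => rw [S_i0]; simp [pascalEntry]
    | succ j => rw [S_0j]; push_cast [pascalEntry]; ring
  | succ i ih =>
    induction j with
    | zero => rw [S_i0]; simp [pascalEntry]
    | succ j ihj =>
      rw [S_rec, pascalEntry, ih, ihj]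

def Tmat (n : ℕ) : Matrix (Fin n) (Fin n) ℤ := Matrix.of fun i j => tEnt i j

def Vmat (n : ℕ) : Matrix (Fin n) (Fin n) ℤ :=
  Matrix.of fun i j => if (j : ℕ) = 0 then 1 else tEnt i j

lemma lowerL_apply (n : ℕ) (i j : Fin n) :
    lowerL ℤ n i j = ((i : ℕ).choose (j : ℕ) : ℤ) := by
  unfold lowerL
  simp only [Matrix.of_apply]
  split_ifs with h
  · rfl
  · rw [Nat.choose_eq_zero_of_lt (by omega)]; simp

lemma sum_choose_trunc (n i : ℕ) (hi : i < n) (X : ℕ → ℤ) :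
    ∑ k ∈ range n, (i.choose k : ℤ) * X k = ∑ k ∈ range (i+1), (i.choose k : ℤ) * X k := by
  symm
  apply Finset.sum_subset
  · exact Finset.range_subset_range.2 (by omega)
  · intro k _ hk
    rw [Nat.choose_eq_zero_of_lt (by simp at hk; omega)]
    simp

lemma pascal_factor (n : ℕ) :
    genPascal (fun i => (2 : ℤ) ^ i + 1) (fun i => 2 - (i : ℤ)) n
      = lowerL ℤ n * Tmat n * (lowerL ℤ n)ᵀ := by
  ext i j
  show pascalEntry _ _ (i:ℕ) (j:ℕ) = _
  rw [pascal_eq_S, Matrix.mul_apply]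
  have e1 : ∀ l : Fin n, (lowerL ℤ n * Tmat n) i l
      = ∑ k ∈ range n, ((i:ℕ).choose k : ℤ) * tEnt k (l:ℕ) := by
    intro l
    rw [Matrix.mul_apply,
      ← Fin.sum_univ_eq_sum_range (fun k => ((i:ℕ).choose k : ℤ) * tEnt k (l:ℕ)) n]
    exact Finset.sum_congr rfl fun k _ => by rw [lowerL_apply]; rfl
  have e2 : ∑ l : Fin n, (lowerL ℤ n * Tmat n) i l * (lowerL ℤ n)ᵀ l j
      = ∑ l ∈ range n, ((j:ℕ).choose l : ℤ) *
          ∑ k ∈ range n, ((i:ℕ).choose k : ℤ) * tEnt k l := by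
    rw [← Fin.sum_univ_eq_sum_range
      (fun l => ((j:ℕ).choose l : ℤ) * ∑ k ∈ range n, ((i:ℕ).choose k : ℤ) * tEnt k l) n]
    refine Finset.sum_congr rfl fun l _ => ?_
    rw [e1, Matrix.transpose_apply, lowerL_apply, mul_comm]
  rw [e2, sum_choose_trunc n (j:ℕ) j.isLt]
  have e3 : ∀ l ∈ range ((j:ℕ)+1), ((j:ℕ).choose l : ℤ) *
        (∑ k ∈ range n, ((i:ℕ).choose k : ℤ) * tEnt k l)
      = ((j:ℕ).choose l : ℤ) * ∑ k ∈ range ((i:ℕ)+1), ((i:ℕ).choose k : ℤ) * tEnt k l := by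
    intro l _
    rw [sum_choose_trunc n (i:ℕ) i.isLt]
  rw [Finset.sum_congr rfl e3]
  unfold S
  rw [Finset.sum_comm]
  refine Finset.sum_congr rfl fun l _ => ?_
  rw [Finset.mul_sum]
  exact Finset.sum_congr rfl fun k _ => by ring

theorem det_lowerL (n : ℕ) : (lowerL ℤ n).det = 1 := by
  rw [Matrix.det_of_lowerTriangular (lowerL ℤ n) ?ht]
  · refine Finset.prod_eq_one fun i _ => ?_
    simp [lowerL]
  · intro i j h
    have : (j:ℕ) > (i:ℕ) := by
      simpa using h
    simp only [lowerL, Matrix.of_apply]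
    rw [if_neg (by omega)]

lemma det_expand2 {m : ℕ} (M : Matrix (Fin (m+2)) (Fin (m+2)) ℤ)
    (h0 : ∀ j : Fin m, M 0 j.succ.succ = 0) :
    M.det = M 0 0 * (M.submatrix Fin.succ ((0 : Fin (m+2)).succAbove)).det
      - M 0 1 * (M.submatrix Fin.succ ((1 : Fin (m+2)).succAbove)).det := by
  rw [Matrix.det_succ_row_zero, Fin.sum_univ_succ, Fin.sum_univ_succ]
  have hz : ∀ j : Fin m,
      ((-1 : ℤ) ^ ((j.succ.succ : Fin (m+2)) : ℕ) * M 0 j.succ.succ *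
        (M.submatrix Fin.succ (Fin.succAbove j.succ.succ)).det) = 0 := by
    intro j; rw [h0]; ring
  rw [Finset.sum_congr rfl fun j _ => hz j]
  simp
  ring

lemma val_succAbove_one {m : ℕ} (j : Fin (m+1)) :
    (((1 : Fin (m+2)).succAbove j : Fin (m+2)) : ℕ)
      = if (j : ℕ) = 0 then 0 else (j : ℕ) + 1 := by
  rcases Fin.eq_zero_or_eq_succ j with h | ⟨j', rfl⟩
  · subst h
    rw [Fin.succAbove_of_castSucc_lt]
    · simp
    · simp [Fin.lt_def]
  · rw [Fin.succAbove_of_le_castSucc]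
    · simp
    · simp [Fin.le_def]

lemma subT0 {m : ℕ} :
    (Tmat (m+2)).submatrix Fin.succ ((0 : Fin (m+2)).succAbove) = Tmat (m+1) := by
  ext i j
  simp only [Matrix.submatrix_apply, Fin.succAbove_zero, Tmat, Matrix.of_apply,
    Fin.val_succ]
  exact tEnt_shift i j

lemma subT1 {m : ℕ} :
    (Tmat (m+2)).submatrix Fin.succ ((1 : Fin (m+2)).succAbove) = Vmat (m+1) := by
  ext i j
  simp only [Matrix.submatrix_apply, Tmat, Vmat, Matrix.of_apply, Fin.val_succ]
  rw [val_succAbove_one]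
  by_cases h : (j : ℕ) = 0
  · simp only [if_pos h]
    rw [tEnt_k0, if_neg (by omega)]
    ring
  · simp only [if_neg h]
    exact tEnt_shift i j

lemma subV0 {m : ℕ} :
    (Vmat (m+2)).submatrix Fin.succ ((0 : Fin (m+2)).succAbove) = Tmat (m+1) := by
  ext i j
  simp only [Matrix.submatrix_apply, Fin.succAbove_zero, Tmat, Vmat, Matrix.of_apply,
    Fin.val_succ]
  rw [if_neg (by omega)]
  exact tEnt_shift i j

lemma subV1 {m : ℕ} :
    (Vmat (m+2)).submatrix Fin.succ ((1 : Fin (m+2)).succAbove) = Vmat (m+1) := by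
  ext i j
  simp only [Matrix.submatrix_apply, Vmat, Matrix.of_apply, Fin.val_succ]
  rw [val_succAbove_one]
  by_cases h : (j : ℕ) = 0
  · simp [h]
  · simp only [if_neg h]
    rw [if_neg (by omega), tEnt_shift]

lemma row0_T {m : ℕ} (j : Fin m) : Tmat (m+2) 0 j.succ.succ = 0 := by
  have h2 : ((j.succ.succ : Fin (m+2)) : ℕ) = (j : ℕ) + 2 := by simp
  simp only [Tmat, Matrix.of_apply, Fin.val_zero, h2]
  rw [tEnt_0l, if_neg (by omega), if_neg (by omega)]

lemma row0_V {m : ℕ} (j : Fin m) : Vmat (m+2) 0 j.succ.succ = 0 := by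
  have h2 : ((j.succ.succ : Fin (m+2)) : ℕ) = (j : ℕ) + 2 := by simp
  simp only [Vmat, Matrix.of_apply, Fin.val_zero, h2]
  rw [if_neg (by omega), tEnt_0l, if_neg (by omega), if_neg (by omega)]

lemma det_TV : ∀ m : ℕ, (Tmat (m+1)).det = (Nat.fib (2*m+3) : ℤ)
    ∧ (Vmat (m+1)).det = (Nat.fib (2*m+2) : ℤ) := by
  intro m
  induction m with
  | zero =>
    constructor
    · rw [Matrix.det_fin_one]; rfl
    · rw [Matrix.det_fin_one]; rfl
  | succ m ih =>
    obtain ⟨ihT, ihV⟩ := ih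
    have hT00 : Tmat (m+2) 0 0 = 2 := rfl
    have hT01 : Tmat (m+2) 0 1 = -1 := rfl
    have hV00 : Vmat (m+2) 0 0 = 1 := rfl
    have hV01 : Vmat (m+2) 0 1 = -1 := rfl
    constructor
    · rw [det_expand2 _ row0_T, subT0, subT1, hT00, hT01, ihT, ihV]
      have key : Nat.fib (2*(m+1)+3) = 2 * Nat.fib (2*m+3) + Nat.fib (2*m+2) := by
        rw [show 2*(m+1)+3 = (2*m+3)+2 by ring, Nat.fib_add_two (n := 2*m+3),
          show 2*m+3+1 = (2*m+2)+2 by ring, Nat.fib_add_two (n := 2*m+2),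
          show 2*m+2+1 = 2*m+3 by ring]
        ring
      rw [key]
      push_cast
      ring
    · rw [det_expand2 _ row0_V, subV0, subV1, hV00, hV01, ihT, ihV]
      have key : Nat.fib (2*(m+1)+2) = Nat.fib (2*m+3) + Nat.fib (2*m+2) := by
        rw [show 2*(m+1)+2 = (2*m+2)+2 by ring, Nat.fib_add_two (n := 2*m+2),
          show 2*m+2+1 = 2*m+3 by ring]
        ring
      rw [key]
      push_cast
      ring

/-- for `α_i = 2^i + 1` and `β_i = 2 - i`, `det(P_{α,β}(n)) = F(2n+1)`. -/
theorem det_genPascal_fib_odd (n : ℕ) (hn : 0 < n) :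
    (genPascal (fun i => (2 : ℤ) ^ i + 1) (fun i => 2 - (i : ℤ)) n).det =
      (Nat.fib (2 * n + 1) : ℤ) := by
  obtain ⟨m, rfl⟩ : ∃ m, n = m + 1 := ⟨n - 1, by omega⟩
  rw [pascal_factor, Matrix.det_mul, Matrix.det_mul, Matrix.det_transpose,
    det_lowerL, (det_TV m).1]
  have : 2 * (m+1) + 1 = 2*m+3 := by ring
  rw [this]
  ring
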